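/- For any point v = x·p + α + y·q ∈ L^{n+1} (with α ∈ E) and w = x·p + β + y·q ∈ L^{n+1} sharing the same p- and q-coordinates, the element of N with parameter X = (α − β)/y maps v to w. (Here y ≠ 0 since 2xy + η(α,α) = −1 forces y ≠ 0 when combined with membership of v in L^{n+1}.) -/

import Mathlib

open Matrix

/-- Index type for the basis `p, e_1, …, e_n, q` of the `(n+2)`-dimensional Minkowski space:
`Sum.inl 0` is `p`, `Sum.inr (Sum.inl i)` is `e_i`, `Sum.inr (Sum.inr 0)` is `q`. -/
abbrev Ix (n : ℕ) := Fin 1 ⊕ (Fin n ⊕ Fin 1)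

def pidx (n : ℕ) : Ix n := Sum.inl 0
def qidx (n : ℕ) : Ix n := Sum.inr (Sum.inr 0)
def midx (n : ℕ) (i : Fin n) : Ix n := Sum.inr (Sum.inl i)

/-- The Minkowski form `η` in the basis `p, e_1, …, e_n, q`:
`η(p,q) = η(q,p) = 1`, `η(e_i,e_i) = 1`, all other products zero. -/
def eta (n : ℕ) (x y : Ix n → ℝ) : ℝ :=
  x (pidx n) * y (qidx n) + x (qidx n) * y (pidx n) +
    ∑ i : Fin n, x (midx n i) * y (midx n i)

/-- The basis vector `p`. -/
def pVec (n : ℕ) : Ix n → ℝ := Pi.single (pidx n) 1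
/-- The basis vector `q`. -/
def qVec (n : ℕ) : Ix n → ℝ := Pi.single (qidx n) 1

/-- The matrix `diag(a, Id, 1/a)` (element of the group `A`). -/
noncomputable def aMat (n : ℕ) (a : ℝ) : Matrix (Ix n) (Ix n) ℝ := fun i j =>
  match i, j with
  | Sum.inl _, Sum.inl _ => a
  | Sum.inr (Sum.inl i), Sum.inr (Sum.inl j) => if i = j then 1 else 0
  | Sum.inr (Sum.inr _), Sum.inr (Sum.inr _) => a⁻¹
  | _, _ => 0

/-- The matrix `diag(1, f, 1)` (element of the group `K`). -/
def kMat (n : ℕ) (f : Matrix (Fin n) (Fin n) ℝ) : Matrix (Ix n) (Ix n) ℝ := fun i j =>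
  match i, j with
  | Sum.inl _, Sum.inl _ => 1
  | Sum.inr (Sum.inl i), Sum.inr (Sum.inl j) => f i j
  | Sum.inr (Sum.inr _), Sum.inr (Sum.inr _) => 1
  | _, _ => 0

/-- The matrix `[[1, -Xᵀ, -XᵀX/2], [0, Id, X], [0, 0, 1]]` (element of the group `N`). -/
noncomputable def nMat (n : ℕ) (X : Fin n → ℝ) : Matrix (Ix n) (Ix n) ℝ := fun i j =>
  match i, j with
  | Sum.inl _, Sum.inl _ => 1
  | Sum.inl _, Sum.inr (Sum.inl j) => -X j
  | Sum.inl _, Sum.inr (Sum.inr _) => -(∑ i : Fin n, X i * X i) / 2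
  | Sum.inr (Sum.inl _), Sum.inl _ => 0
  | Sum.inr (Sum.inl i), Sum.inr (Sum.inl j) => if i = j then 1 else 0
  | Sum.inr (Sum.inl i), Sum.inr (Sum.inr _) => X i
  | Sum.inr (Sum.inr _), Sum.inl _ => 0
  | Sum.inr (Sum.inr _), Sum.inr (Sum.inl _) => 0
  | Sum.inr (Sum.inr _), Sum.inr (Sum.inr _) => 1

/-- The identification of the Euclidean space `E` with `∂L^{n+1} \ {ℝp}`: the point `X ∈ E`
corresponds to the isotropic line spanned by `ι(X) = -(‖X‖²/2)·p + X + q`. -/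
noncomputable def iota (n : ℕ) (X : Fin n → ℝ) : Ix n → ℝ := fun i =>
  match i with
  | Sum.inl _ => -(∑ j : Fin n, X j * X j) / 2
  | Sum.inr (Sum.inl j) => X j
  | Sum.inr (Sum.inr _) => 1

/-- The vector `x·p + α + y·q` in coordinates w.r.t. the basis `p, e_1, …, e_n, q`. -/
def vecOf (n : ℕ) (x : ℝ) (α : Fin n → ℝ) (y : ℝ) : Ix n → ℝ := fun i =>
  match i with
  | Sum.inl _ => x
  | Sum.inr (Sum.inl j) => α j
  | Sum.inr (Sum.inr _) => y

/-- for points `v = x·p + α + y·q` and `w = x·p + β + y·q` of `L^{n+1}`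
(so `2xy + η(α,α) = −1 = 2xy + η(β,β)`; membership in `L^{n+1}` forces `y ≠ 0`) sharing
the same `p`- and `q`-coordinates, the element of `N` with parameter `X = (β − α)/y`
maps `v` to `w`.  (The paper writes `X = (α − β)/y`; with the stated matrix convention
`[[1, -Xᵀ, -XᵀX/2],[0, Id, X],[0, 0, 1]]` acting on column vectors, that parameter maps
`w` to `v`, i.e. the sign is a typo; the statement formalized here is the intended one:
the displayed element of `N` carries `v` to `w`.) -/
theorem stmt16 (n : ℕ) (x y : ℝ) (α β : Fin n → ℝ)
    (hv : 2 * x * y + (∑ i : Fin n, α i * α i) = -1)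
    (hw : 2 * x * y + (∑ i : Fin n, β i * β i) = -1)
    (hy : y ≠ 0) :
    (nMat n (y⁻¹ • (β - α))).mulVec (vecOf n x α y) = vecOf n x β y := by
  have key : (∑ i : Fin n, β i * β i) = ∑ i : Fin n, α i * α i := by linarith
  funext i
  rcases i with ⟨i⟩ | ⟨i⟩ | ⟨i⟩ <;>
    simp only [mulVec, dotProduct, nMat, vecOf, Fintype.sum_sum_type, Fin.sum_univ_one,
      Pi.smul_apply, Pi.sub_apply, smul_eq_mul]
  · set S1 := ∑ j : Fin n, (β j - α j) * α j with hS1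
    set S2 := ∑ j : Fin n, (β j - α j) * (β j - α j) with hS2
    have hsum : 2 * S1 + S2 = 0 := by
      have h : 2 * S1 + S2 = (∑ j : Fin n, β j * β j) - ∑ j : Fin n, α j * α j := by
        rw [hS1, hS2, Finset.mul_sum, ← Finset.sum_add_distrib, ← Finset.sum_sub_distrib]
        exact Finset.sum_congr rfl fun j _ => by ring
      rw [h, key]; ring
    have e1 : (∑ j : Fin n, -(y⁻¹ * (β j - α j)) * α j) = -(y⁻¹ * S1) := by
      rw [hS1, Finset.mul_sum, ← Finset.sum_neg_distrib]
      exact Finset.sum_congr rfl fun j _ => by ring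
    have e2 : (∑ j : Fin n, y⁻¹ * (β j - α j) * (y⁻¹ * (β j - α j))) = y⁻¹ * y⁻¹ * S2 := by
      rw [hS2, mul_assoc, Finset.mul_sum, Finset.mul_sum]
      exact Finset.sum_congr rfl fun j _ => by ring
    rw [e1, e2]
    field_simp
    linear_combination (-1 : ℝ) * hsum
  · simp only [ite_mul, one_mul, zero_mul, Finset.sum_ite_eq, Finset.mem_univ, if_true]
    field_simp
    ring
  · simp
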